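/- For all indices i ≠ j, 𝒱 · 𝒱_{ij} = 𝒱_i · 𝒱_j · sin θ_{ij}, where θ_{ij} ∈ [0,π] is the interior dihedral angle defined by cos θ_{ij} = −⟨b_i,b_j⟩/(‖b_i‖‖b_j‖). -/

import Mathlib

open scoped RealInnerProductSpace

/-- Block form of Jacobi's identity: if `M * N = 1` for block matrices, then
`det M * det N₂₂ = det M₁₁`. -/
theorem block_jacobi {m k : Type*} [Fintype m] [DecidableEq m] [Fintype k] [DecidableEq k]
    (A : Matrix m m ℝ) (B : Matrix m k ℝ) (C : Matrix k m ℝ) (D : Matrix k k ℝ)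
    (A' : Matrix m m ℝ) (B' : Matrix m k ℝ) (C' : Matrix k m ℝ) (D' : Matrix k k ℝ)
    (h : Matrix.fromBlocks A B C D * Matrix.fromBlocks A' B' C' D' = 1) :
    (Matrix.fromBlocks A B C D).det * D'.det = A.det := by
  rw [Matrix.fromBlocks_multiply] at h
  have hone12 : Matrix.toBlocks₁₂ (1 : Matrix (m ⊕ k) (m ⊕ k) ℝ) = 0 := by
    ext a c
    simp [Matrix.toBlocks₁₂, Matrix.one_apply]
  have hone22 : Matrix.toBlocks₂₂ (1 : Matrix (m ⊕ k) (m ⊕ k) ℝ) = 1 := by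
    ext a c
    simp [Matrix.toBlocks₂₂, Matrix.one_apply]
  have h12 : A * B' + B * D' = 0 := by
    have h' := congrArg Matrix.toBlocks₁₂ h
    rwa [Matrix.toBlocks_fromBlocks₁₂, hone12] at h'
  have h22 : C * B' + D * D' = 1 := by
    have h' := congrArg Matrix.toBlocks₂₂ h
    rwa [Matrix.toBlocks_fromBlocks₂₂, hone22] at h' 
  have key : Matrix.fromBlocks A B C D * Matrix.fromBlocks 1 B' 0 D'
      = Matrix.fromBlocks A 0 C 1 := by
    rw [Matrix.fromBlocks_multiply]
    rw [h12, h22]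
    simp
  have := congrArg Matrix.det key
  rw [Matrix.det_mul, Matrix.det_fromBlocks_zero₂₁, Matrix.det_fromBlocks_zero₁₂] at this
  simpa using this

/-- Jacobi's identity for complementary minors (principal case). -/
theorem jacobi_det {n m k : Type*} [Fintype n] [DecidableEq n] [Fintype m] [DecidableEq m]
    [Fintype k] [DecidableEq k] (G H : Matrix n n ℝ) (hGH : G * H = 1) (σ : m ⊕ k ≃ n) :
    G.det * (H.submatrix (σ ∘ Sum.inr) (σ ∘ Sum.inr)).det
      = (G.submatrix (σ ∘ Sum.inl) (σ ∘ Sum.inl)).det := by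
  have h : (G.submatrix σ σ) * (H.submatrix σ σ) = 1 := by
    rw [Matrix.submatrix_mul_equiv, hGH, Matrix.submatrix_one_equiv]
  have hG : G.submatrix σ σ = Matrix.fromBlocks
      (G.submatrix (σ ∘ Sum.inl) (σ ∘ Sum.inl)) (G.submatrix (σ ∘ Sum.inl) (σ ∘ Sum.inr))
      (G.submatrix (σ ∘ Sum.inr) (σ ∘ Sum.inl)) (G.submatrix (σ ∘ Sum.inr) (σ ∘ Sum.inr)) := by
    ext (a | a) (c | c) <;> rfl
  have hH : H.submatrix σ σ = Matrix.fromBlocks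
      (H.submatrix (σ ∘ Sum.inl) (σ ∘ Sum.inl)) (H.submatrix (σ ∘ Sum.inl) (σ ∘ Sum.inr))
      (H.submatrix (σ ∘ Sum.inr) (σ ∘ Sum.inl)) (H.submatrix (σ ∘ Sum.inr) (σ ∘ Sum.inr)) := by
    ext (a | a) (c | c) <;> rfl
  rw [hG, hH] at h
  have := block_jacobi _ _ _ _ _ _ _ _ h
  rw [← hG, Matrix.det_submatrix_equiv_self] at this
  exact this

def singleEquiv {n : Type*} [DecidableEq n] (i : n) : {x : n // x ≠ i} ⊕ Unit ≃ n where
  toFun := Sum.elim Subtype.val fun _ => i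
  invFun x := if h : x = i then Sum.inr () else Sum.inl ⟨x, h⟩
  left_inv := by
    rintro s
    rcases s with ⟨x, hx⟩ | u
    · simp [hx]
    · simp
  right_inv x := by by_cases h : x = i <;> simp [h]

def pairEquiv {n : Type*} [DecidableEq n] {i j : n} (hij : i ≠ j) :
    {x : n // x ≠ i ∧ x ≠ j} ⊕ Bool ≃ n where
  toFun := Sum.elim Subtype.val fun s => if s then i else j
  invFun x := if h1 : x = i then Sum.inr true else if h2 : x = j then Sum.inr false
    else Sum.inl ⟨x, h1, h2⟩
  left_inv := by
    rintro s
    rcases s with ⟨x, hx1, hx2⟩ | s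
    · simp [hx1, hx2]
    · rcases s with _ | _ <;> simp [hij, Ne.symm hij]
  right_inv x := by
    rcases Decidable.eq_or_ne x i with h1 | h1
    · subst h1; simp
    · rcases Decidable.eq_or_ne x j with h2 | h2
      · subst h2; simp [Ne.symm hij, hij]
      · simp [h1, h2]

theorem stmt_2 (D : ℕ) (hD : 1 ≤ D) (E : Type*) [NormedAddCommGroup E]
    [InnerProductSpace ℝ E] (hdim : Module.finrank ℝ E = D + 1)
    (e : Module.Basis (Fin (D + 1)) ℝ E) (b : Fin (D + 1) → E)
    (hb : ∀ i j, ⟪b i, e j⟫ = if i = j then 1 else 0)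
    (i j : Fin (D + 1)) (hij : i ≠ j) :
    Real.sqrt (Matrix.det (Matrix.of fun a c : Fin (D + 1) => ⟪e a, e c⟫))
        * Real.sqrt (Matrix.det
          (Matrix.of fun a c : {x : Fin (D + 1) // x ≠ i ∧ x ≠ j} => ⟪e a.1, e c.1⟫))
      = Real.sqrt (Matrix.det (Matrix.of fun a c : {x : Fin (D + 1) // x ≠ i} => ⟪e a.1, e c.1⟫))
        * Real.sqrt (Matrix.det
            (Matrix.of fun a c : {x : Fin (D + 1) // x ≠ j} => ⟪e a.1, e c.1⟫))
        * Real.sin (Real.arccos (-⟪b i, b j⟫ / (‖b i‖ * ‖b j‖))) := by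
  classical
  set G : Matrix (Fin (D + 1)) (Fin (D + 1)) ℝ := Matrix.of fun a c => ⟪e a, e c⟫ with hGdef
  set H : Matrix (Fin (D + 1)) (Fin (D + 1)) ℝ := Matrix.of fun a c => ⟪b a, b c⟫ with hHdef
  have hrepr : ∀ (k : Fin (D + 1)) (v : E), ⟪b k, v⟫ = e.repr v k := by
    intro k v
    have hmaps : ((innerSL ℝ (b k)).toLinearMap : E →ₗ[ℝ] ℝ) = e.coord k := by
      apply e.ext
      intro m
      simp [hb, Module.Basis.coord_apply, Finsupp.single_apply, eq_comm]
    have := LinearMap.congr_fun hmaps v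
    simpa using this
  have hHG : H * G = 1 := by
    ext p q
    rw [Matrix.mul_apply]
    have hterm : ∀ jj, H p jj * G jj q = ⟪(e.repr (b p) jj) • e jj, e q⟫ := by
      intro jj
      rw [real_inner_smul_left, ← hrepr]
      simp [hHdef, hGdef, real_inner_comm (b p) (b jj)]
    calc (∑ jj, H p jj * G jj q) = ∑ jj, ⟪(e.repr (b p) jj) • e jj, e q⟫ := by
          exact Finset.sum_congr rfl fun jj _ => hterm jj
      _ = ⟪∑ jj, (e.repr (b p) jj) • e jj, e q⟫ := (sum_inner _ _ _).symm
      _ = ⟪b p, e q⟫ := by rw [e.sum_repr (b p)]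
      _ = (1 : Matrix (Fin (D+1)) (Fin (D+1)) ℝ) p q := by
          rw [hb]; simp [Matrix.one_apply]
  have hGH : G * H = 1 := mul_eq_one_comm.mpr hHG
  have hbi : ∀ k, b k ≠ 0 := by
    intro k hk
    have := hb k k
    rw [hk] at this
    simpa using this
  have hu : (0 : ℝ) < ‖b i‖ := norm_pos_iff.mpr (hbi i)
  have hv : (0 : ℝ) < ‖b j‖ := norm_pos_iff.mpr (hbi j)
  -- Single-index minors
  have F1 : ∀ k : Fin (D + 1),
      (Matrix.of fun a c : {x : Fin (D + 1) // x ≠ k} => ⟪e a.1, e c.1⟫).det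
        = ⟪b k, b k⟫ * G.det := by
    intro k
    have := jacobi_det G H hGH (singleEquiv k)
    rw [Matrix.det_unique (H.submatrix ((singleEquiv k) ∘ Sum.inr)
      ((singleEquiv k) ∘ Sum.inr))] at this
    have hsub : (G.submatrix ((singleEquiv k) ∘ Sum.inl) ((singleEquiv k) ∘ Sum.inl))
        = (Matrix.of fun a c : {x : Fin (D + 1) // x ≠ k} => ⟪e a.1, e c.1⟫) := rfl
    rw [hsub] at this
    rw [← this]
    have : (H.submatrix ((singleEquiv k) ∘ Sum.inr) ((singleEquiv k) ∘ Sum.inr))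
        default default = ⟪b k, b k⟫ := rfl
    rw [this, mul_comm]
  -- Pair minor
  have F2 : (Matrix.of fun a c : {x : Fin (D + 1) // x ≠ i ∧ x ≠ j} => ⟪e a.1, e c.1⟫).det
      = (⟪b i, b i⟫ * ⟪b j, b j⟫ - ⟪b i, b j⟫ * ⟪b i, b j⟫) * G.det := by
    have := jacobi_det G H hGH (pairEquiv hij)
    have hsub : (G.submatrix ((pairEquiv hij) ∘ Sum.inl) ((pairEquiv hij) ∘ Sum.inl))
        = (Matrix.of fun a c : {x : Fin (D + 1) // x ≠ i ∧ x ≠ j} => ⟪e a.1, e c.1⟫) := rfl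
    rw [hsub] at this
    rw [← this]
    have hdet2 : (H.submatrix ((pairEquiv hij) ∘ Sum.inr) ((pairEquiv hij) ∘ Sum.inr)).det
        = ⟪b i, b i⟫ * ⟪b j, b j⟫ - ⟪b i, b j⟫ * ⟪b i, b j⟫ := by
      rw [← Matrix.det_submatrix_equiv_self finTwoEquiv, Matrix.det_fin_two]
      have e00 : ((H.submatrix ((pairEquiv hij) ∘ Sum.inr) ((pairEquiv hij) ∘ Sum.inr)).submatrix
          finTwoEquiv finTwoEquiv) 0 0 = ⟪b j, b j⟫ := rfl
      have e01 : ((H.submatrix ((pairEquiv hij) ∘ Sum.inr) ((pairEquiv hij) ∘ Sum.inr)).submatrix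
          finTwoEquiv finTwoEquiv) 0 1 = ⟪b j, b i⟫ := rfl
      have e10 : ((H.submatrix ((pairEquiv hij) ∘ Sum.inr) ((pairEquiv hij) ∘ Sum.inr)).submatrix
          finTwoEquiv finTwoEquiv) 1 0 = ⟪b i, b j⟫ := rfl
      have e11 : ((H.submatrix ((pairEquiv hij) ∘ Sum.inr) ((pairEquiv hij) ∘ Sum.inr)).submatrix
          finTwoEquiv finTwoEquiv) 1 1 = ⟪b i, b i⟫ := rfl
      rw [e00, e01, e10, e11, real_inner_comm (b j) (b i)]
      ring
    rw [hdet2, mul_comm]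
  rw [F1 i, F1 j, F2]
  set g : ℝ := G.det
  set u : ℝ := ‖b i‖
  set v : ℝ := ‖b j‖
  set t : ℝ := ⟪b i, b j⟫ with ht
  have hii : ⟪b i, b i⟫ = u * u := real_inner_self_eq_norm_mul_norm (b i)
  have hjj : ⟪b j, b j⟫ = v * v := real_inner_self_eq_norm_mul_norm (b j)
  rw [hii, hjj]
  have hP : (0 : ℝ) ≤ u * u * (v * v) - t * t := by
    have h1 : |t| ≤ u * v := abs_real_inner_le_norm (b i) (b j)
    nlinarith [abs_nonneg t, sq_abs t, sq_nonneg t]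
  have harccos : Real.sin (Real.arccos (-t / (u * v)))
      = Real.sqrt (u * u * (v * v) - t * t) / (u * v) := by
    rw [Real.sin_arccos]
    have h1 : 1 - (-t / (u * v)) ^ 2 = (u * u * (v * v) - t * t) / ((u * v) * (u * v)) := by
      field_simp
    rw [h1, Real.sqrt_div hP, Real.sqrt_mul_self (by positivity : (0:ℝ) ≤ u * v)]
  rw [harccos]
  rw [Real.sqrt_mul hP, Real.sqrt_mul (mul_self_nonneg u), Real.sqrt_mul (mul_self_nonneg v),
    Real.sqrt_mul_self hu.le, Real.sqrt_mul_self hv.le]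
  field_simp
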